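/- Let G and H be finite simple graphs that are both twin-free and negation-free. Then the parity product G ⊞ H is twin-free and negation-free. -/

import Mathlib

/-- The parity product `G ⊞ H` of two simple graphs: `(a,x)` is adjacent to `(b,y)` iff
exactly one of `a ~ b` (in `G`) and `x ~ y` (in `H`) holds. -/
def SimpleGraph.parityProd {α β : Type*} (G : SimpleGraph α) (H : SimpleGraph β) :
    SimpleGraph (α × β) where
  Adj p q := Xor' (G.Adj p.1 q.1) (H.Adj p.2 q.2)
  symm := ⟨fun (p q : α × β) h => by show Xor' (G.Adj q.1 p.1) (H.Adj q.2 p.2); rwa [G.adj_comm q.1 p.1, H.adj_comm q.2 p.2]⟩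
  loopless := ⟨fun p h => by simp [Xor'] at h⟩

/-- If `G` and `H` are finite simple graphs, both twin-free and negation-free, then the
parity product `G ⊞ H` is twin-free and negation-free. -/
theorem stmt_5 {α β : Type*} [Fintype α] [Fintype β]
    (G : SimpleGraph α) (H : SimpleGraph β)
    (hGtwin : ∀ u v : α, G.neighborSet u = G.neighborSet v → u = v)
    (hHtwin : ∀ u v : β, H.neighborSet u = H.neighborSet v → u = v)
    (hGneg : ∀ u v : α, G.neighborSet v ≠ (G.neighborSet u)ᶜ)
    (hHneg : ∀ u v : β, H.neighborSet v ≠ (H.neighborSet u)ᶜ) :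
    (∀ p q : α × β, (G.parityProd H).neighborSet p = (G.parityProd H).neighborSet q → p = q) ∧
    (∀ p q : α × β, (G.parityProd H).neighborSet q ≠ ((G.parityProd H).neighborSet p)ᶜ) := by
  have padj : ∀ (p q : α × β), (G.parityProd H).Adj p q ↔
      Xor' (G.Adj p.1 q.1) (H.Adj p.2 q.2) := fun _ _ => Iff.rfl
  constructor
  · rintro ⟨a, x⟩ ⟨b, y⟩ h
    rw [Set.ext_iff] at h
    have h' : ∀ c z, (Xor' (G.Adj a c) (H.Adj x z) ↔ Xor' (G.Adj b c) (H.Adj y z)) := by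
      intro c z
      have := h (c, z)
      simpa [SimpleGraph.mem_neighborSet, padj, Xor'] using this
    by_cases hz : ∀ z, (H.Adj x z ↔ H.Adj y z)
    · have hab : a = b := by
        apply hGtwin
        ext c
        have h1 := h' c x
        have h2 := hz x
        simp only [SimpleGraph.mem_neighborSet, Xor', xor_iff_or_and_not_and] at *
        tauto
      have hxy : x = y := hHtwin x y (Set.ext fun z => by
        simpa [SimpleGraph.mem_neighborSet] using hz z)
      rw [hab, hxy]
    · push_neg at hz
      obtain ⟨z, hzne⟩ := hz
      exfalso
      apply hGneg b a
      ext c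
      have h1 := h' c z
      simp only [SimpleGraph.mem_neighborSet, Set.mem_compl_iff, Xor', xor_iff_or_and_not_and] at *
      tauto
  · rintro ⟨a, x⟩ ⟨b, y⟩ h
    rw [Set.ext_iff] at h
    have h' : ∀ c z, (Xor' (G.Adj b c) (H.Adj y z) ↔ ¬ Xor' (G.Adj a c) (H.Adj x z)) := by
      intro c z
      have := h (c, z)
      simpa [SimpleGraph.mem_neighborSet, padj, Set.mem_compl_iff] using this
    by_cases hyx : H.Adj y x
    · -- adjacency in G agrees, then H neighborhoods complementary
      have hGeq : ∀ c, (G.Adj b c ↔ G.Adj a c) := by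
        intro c
        have h1 := h' c x
        have hxx : ¬ H.Adj x x := H.loopless.irrefl x
        simp only [Xor', xor_iff_or_and_not_and] at h1
        tauto
      apply hHneg x y
      ext z
      have h1 := h' a z
      have h2 := hGeq a
      have haa : ¬ G.Adj a a := G.loopless.irrefl a
      simp only [SimpleGraph.mem_neighborSet, Set.mem_compl_iff, Xor', xor_iff_or_and_not_and] at *
      tauto
    · apply hGneg a b
      ext c
      have h1 := h' c x
      have hxx : ¬ H.Adj x x := H.loopless.irrefl x
      simp only [SimpleGraph.mem_neighborSet, Set.mem_compl_iff, Xor', xor_iff_or_and_not_and] at *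
      tauto
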